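/- Let $X$ be a finite probability space, $f: X \to \{0,1\}$, and let $\mathcal{B}'$ be a partition of $X$ refining a partition $\mathcal{B}$. Suppose every cell of $\mathcal{B}$ has probability at least $\mu > 0$, every cell of $\mathcal{B}'$ within a given cell $c$ of $\mathcal{B}$ has conditional probability (within $c$) at least $\nu > 0$, and suppose that for at least a fraction $\beta$ of the cells $c$ of $\mathcal{B}$ (weighted uniformly among cells, of which there are $N$), at least a fraction $\beta$ of the subcells $c' \subseteq c$ of $\mathcal{B}'$ satisfy $|\mathbb{E}[f|c'] - \mathbb{E}[f|c]| > \zeta$. Then $\mathbb{E}[(\mathbb{E}[f|\mathcal{B}'])^2] \geq \mathbb{E}[(\mathbb{E}[f|\mathcal{B}])^2] + \beta N \mu \cdot \frac{\beta \nu}{2} \cdot \zeta^2 / 2$; in particular the density index increases by a positive amount depending only on $\beta, \mu, \nu, \zeta$ (and $N$). -/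

import Mathlib

open scoped Classical

/-- Average of `f` on the cell `{x | B x = c}` (uniform measure). -/
noncomputable def cellAvg {X : Type*} [Fintype X] {β : Type*}
    (f : X → ℝ) (B : X → β) (c : β) : ℝ :=
  (∑ x ∈ Finset.univ.filter (fun x => B x = c), f x) /
    ((Finset.univ.filter (fun x => B x = c)).card : ℝ)

/-- Conditional expectation of `f` with respect to the partition induced by `B`. -/
noncomputable def condExp {X : Type*} [Fintype X] {β : Type*}
    (f : X → ℝ) (B : X → β) : X → ℝ := fun x => cellAvg f B (B x)

/-- If a `β`-fraction of the cells of `𝓑` have a `β`-fraction of their subcells (in the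
refinement `𝓑'`, with cell-to-cell map `π`) whose average of `f` deviates from the cell
average by more than `ζ`, and all cells have probability at least `μ` while subcells have
conditional probability at least `ν`, then the density index increases by at least
`β N μ (β ν / 2) ζ² / 2`, where `N` is the number of cells of `𝓑`. -/
theorem index_increase_of_nonrepresenting {X : Type*} [Fintype X] [Nonempty X]
    {β' γ : Type*} [Fintype β'] [Fintype γ]
    (f : X → ℝ) (hf : ∀ x, f x = 0 ∨ f x = 1)
    (B : X → β') (B' : X → γ) (π : γ → β') (hπ : ∀ x, π (B' x) = B x)
    (μ ν ζ β : ℝ) (hμ : 0 < μ) (hν : 0 < ν) (hζ : 0 < ζ) (hβ : 0 < β)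
    (hcell : ∀ c : β', μ ≤ ((Finset.univ.filter (fun x => B x = c)).card : ℝ) /
      (Fintype.card X : ℝ))
    (hsub : ∀ c' : γ, ν ≤ ((Finset.univ.filter (fun x => B' x = c')).card : ℝ) /
      ((Finset.univ.filter (fun x => B x = π c')).card : ℝ))
    (hdev : β * (Fintype.card β' : ℝ) ≤
      ((Finset.univ.filter (fun c : β' =>
        β * ((Finset.univ.filter (fun c' : γ => π c' = c)).card : ℝ) ≤
          ((Finset.univ.filter (fun c' : γ => π c' = c ∧
            ζ < |cellAvg f B' c' - cellAvg f B c|)).card : ℝ))).card : ℝ)) :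
    (∑ x, (condExp f B' x) ^ 2) / (Fintype.card X : ℝ)
      ≥ (∑ x, (condExp f B x) ^ 2) / (Fintype.card X : ℝ)
        + β * (Fintype.card β' : ℝ) * μ * (β * ν / 2) * ζ ^ 2 / 2 := by
  classical
  set n : ℝ := (Fintype.card X : ℝ) with hn
  have hXpos : (0:ℝ) < n := by
    rw [hn]
    exact_mod_cast (Fintype.card_pos : 0 < Fintype.card X)
  set C : β' → Finset X := fun c => Finset.univ.filter (fun x => B x = c) with hC
  set D : γ → Finset X := fun c' => Finset.univ.filter (fun x => B' x = c') with hD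
  set P : β' → Finset γ := fun c => Finset.univ.filter (fun c' => π c' = c) with hP
  set aC : β' → ℝ := fun c => cellAvg f B c with haC
  set aD : γ → ℝ := fun c' => cellAvg f B' c' with haD
  -- positivity of cell cards
  have hCpos : ∀ c, (0:ℝ) < ((C c).card : ℝ) := by
    intro c
    have h : μ * n ≤ ((C c).card : ℝ) := (le_div_iff₀ hXpos).mp (hcell c)
    exact lt_of_lt_of_le (mul_pos hμ hXpos) h
  have hDpos : ∀ c', (0:ℝ) < ((D c').card : ℝ) := by
    intro c'
    have h := hsub c'
    have hc := hCpos (π c')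
    have : ν * ((C (π c')).card : ℝ) ≤ ((D c').card : ℝ) := by
      rw [le_div_iff₀ hc] at h; exact h
    nlinarith [mul_pos hν hc]
  -- partition fact: sum over subcells of c equals sum over cell c
  have hpart : ∀ (c : β') (g : X → ℝ),
      ∑ c' ∈ P c, ∑ x ∈ D c', g x = ∑ x ∈ C c, g x := by
    intro c g
    have h1 : ∑ c' ∈ P c, ∑ x ∈ (C c).filter (fun x => B' x = c'), g x
        = ∑ x ∈ C c, g x := by
      apply Finset.sum_fiberwise_of_maps_to
      intro x hx
      simp only [hP, Finset.mem_filter, Finset.mem_univ, true_and]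
      simp only [hC, Finset.mem_filter, Finset.mem_univ, true_and] at hx
      rw [hπ, hx]
    rw [← h1]
    apply Finset.sum_congr rfl
    intro c' hc'
    simp only [hP, Finset.mem_filter, Finset.mem_univ, true_and] at hc'
    congr 1
    ext x
    simp only [hC, hD, Finset.mem_filter, Finset.mem_univ, true_and]
    constructor
    · intro h; exact ⟨by rw [← hπ x, h, hc'], h⟩
    · exact fun h => h.2
  have hsumC : ∀ c, ∑ x ∈ C c, f x = ((C c).card : ℝ) * aC c := by
    intro c
    have := (hCpos c).ne'
    simp only [haC, cellAvg, hC]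
    field_simp
    exact (mul_div_cancel_right₀ _ (by simpa [hC] using this)).symm
  have hsumD : ∀ c', ∑ x ∈ D c', f x = ((D c').card : ℝ) * aD c' := by
    intro c'
    have := (hDpos c').ne'
    simp only [haD, cellAvg, hD]
    field_simp
    exact (mul_div_cancel_right₀ _ (by simpa [hD] using this)).symm
  have hcard : ∀ c, ∑ c' ∈ P c, ((D c').card : ℝ) = ((C c).card : ℝ) := by
    intro c
    have := hpart c (fun _ => (1:ℝ))
    simpa using this
  have hfsum : ∀ c, ∑ c' ∈ P c, ((D c').card : ℝ) * aD c' = ((C c).card : ℝ) * aC c := by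
    intro c
    rw [← hsumC c, ← hpart c f]
    exact Finset.sum_congr rfl fun c' _ => (hsumD c').symm
  -- energies
  have hE' : ∑ x, (condExp f B' x) ^ 2 = ∑ c' : γ, ((D c').card : ℝ) * (aD c') ^ 2 := by
    rw [← Finset.sum_fiberwise Finset.univ B' (fun x => (condExp f B' x) ^ 2)]
    apply Finset.sum_congr rfl
    intro c' _
    rw [show ∑ x ∈ Finset.univ.filter (fun x => B' x = c'), (condExp f B' x) ^ 2
        = ∑ x ∈ D c', (aD c') ^ 2 from Finset.sum_congr rfl (fun x hx => by
          have hx' : B' x = c' := (Finset.mem_filter.mp hx).2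
          simp [condExp, haD, hx'])]
    rw [Finset.sum_const, nsmul_eq_mul]
  have hE : ∑ x, (condExp f B x) ^ 2 = ∑ c : β', ((C c).card : ℝ) * (aC c) ^ 2 := by
    rw [← Finset.sum_fiberwise Finset.univ B (fun x => (condExp f B x) ^ 2)]
    apply Finset.sum_congr rfl
    intro c _
    rw [show ∑ x ∈ Finset.univ.filter (fun x => B x = c), (condExp f B x) ^ 2
        = ∑ x ∈ C c, (aC c) ^ 2 from Finset.sum_congr rfl (fun x hx => by
          have hx' : B x = c := (Finset.mem_filter.mp hx).2
          simp [condExp, haC, hx'])]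
    rw [Finset.sum_const, nsmul_eq_mul]
  have hE'2 : ∑ c' : γ, ((D c').card : ℝ) * (aD c') ^ 2
      = ∑ c : β', ∑ c' ∈ P c, ((D c').card : ℝ) * (aD c') ^ 2 := by
    rw [Finset.sum_fiberwise Finset.univ π (fun c' => ((D c').card : ℝ) * (aD c') ^ 2)]
  -- identity per cell
  have hiden : ∀ c, ∑ c' ∈ P c, ((D c').card : ℝ) * (aD c' - aC c) ^ 2
      = (∑ c' ∈ P c, ((D c').card : ℝ) * (aD c') ^ 2) - ((C c).card : ℝ) * (aC c) ^ 2 := by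
    intro c
    have expand : ∀ c' ∈ P c, ((D c').card : ℝ) * (aD c' - aC c) ^ 2
        = ((D c').card : ℝ) * (aD c') ^ 2
          - 2 * aC c * (((D c').card : ℝ) * aD c')
          + (aC c) ^ 2 * ((D c').card : ℝ) := by
      intro c' _; ring
    rw [Finset.sum_congr rfl expand]
    rw [Finset.sum_add_distrib, Finset.sum_sub_distrib, ← Finset.mul_sum, ← Finset.mul_sum,
      hfsum, hcard]
    ring
  -- good set
  set G : Finset β' := Finset.univ.filter (fun c : β' =>
      β * ((P c).card : ℝ) ≤
        ((Finset.univ.filter (fun c' : γ => π c' = c ∧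
          ζ < |aD c' - aC c|)).card : ℝ)) with hG
  -- per-cell lower bounds
  have h1 : ∀ c : β', ((C c).card : ℝ) * (aC c) ^ 2
      ≤ ∑ c' ∈ P c, ((D c').card : ℝ) * (aD c') ^ 2 := by
    intro c
    have h0 : (0:ℝ) ≤ ∑ c' ∈ P c, ((D c').card : ℝ) * (aD c' - aC c) ^ 2 :=
      Finset.sum_nonneg fun c' _ => mul_nonneg (Nat.cast_nonneg _) (sq_nonneg _)
    linarith [hiden c, h0]
  have h2 : ∀ c ∈ G, ((C c).card : ℝ) * (aC c) ^ 2 + β * ν * ζ ^ 2 * ((C c).card : ℝ)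
      ≤ ∑ c' ∈ P c, ((D c').card : ℝ) * (aD c') ^ 2 := by
    intro c hc
    simp only [hG, Finset.mem_filter, Finset.mem_univ, true_and] at hc
    set S : Finset γ := Finset.univ.filter (fun c' : γ => π c' = c ∧
      ζ < |aD c' - aC c|) with hS
    have hSP : S ⊆ P c := by
      intro c' hc'
      simp only [hS, Finset.mem_filter, Finset.mem_univ, true_and] at hc'
      simp only [hP, Finset.mem_filter, Finset.mem_univ, true_and]
      exact hc'.1
    have hterm : ∀ c' ∈ S, ν * ((C c).card : ℝ) * ζ ^ 2
        ≤ ((D c').card : ℝ) * (aD c' - aC c) ^ 2 := by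
      intro c' hc'
      simp only [hS, Finset.mem_filter, Finset.mem_univ, true_and] at hc'
      have hnd : ν * ((C c).card : ℝ) ≤ ((D c').card : ℝ) := by
        have h := hsub c'
        rw [hc'.1] at h
        rw [le_div_iff₀ (hCpos c)] at h
        exact h
      have hsq : ζ ^ 2 ≤ (aD c' - aC c) ^ 2 := by
        have : ζ ≤ |aD c' - aC c| := le_of_lt hc'.2
        calc ζ ^ 2 ≤ |aD c' - aC c| ^ 2 := by
              apply pow_le_pow_left₀ (le_of_lt hζ) this
          _ = (aD c' - aC c) ^ 2 := sq_abs _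
      exact mul_le_mul hnd hsq (sq_nonneg _) (Nat.cast_nonneg _)
    have hsum1 : ∑ c' ∈ S, (ν * ((C c).card : ℝ) * ζ ^ 2)
        ≤ ∑ c' ∈ S, ((D c').card : ℝ) * (aD c' - aC c) ^ 2 :=
      Finset.sum_le_sum hterm
    have hsum2 : ∑ c' ∈ S, ((D c').card : ℝ) * (aD c' - aC c) ^ 2
        ≤ ∑ c' ∈ P c, ((D c').card : ℝ) * (aD c' - aC c) ^ 2 :=
      Finset.sum_le_sum_of_subset_of_nonneg hSP
        (fun c' _ _ => mul_nonneg (Nat.cast_nonneg _) (sq_nonneg _))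
    have hconst : ∑ c' ∈ S, (ν * ((C c).card : ℝ) * ζ ^ 2)
        = (S.card : ℝ) * (ν * ((C c).card : ℝ) * ζ ^ 2) := by
      rw [Finset.sum_const, nsmul_eq_mul]
    have hPcard : (1:ℝ) ≤ ((P c).card : ℝ) := by
      have : (P c).Nonempty := by
        have : (C c).Nonempty := by
          rw [← Finset.card_pos]
          exact_mod_cast hCpos c
        obtain ⟨x, hx⟩ := this
        simp only [hC, Finset.mem_filter, Finset.mem_univ, true_and] at hx
        exact ⟨B' x, by simp [hP, hπ, hx]⟩
      have := Finset.card_pos.mpr this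
      exact_mod_cast this
    have hScard : β ≤ (S.card : ℝ) := by
      have : β * 1 ≤ β * ((P c).card : ℝ) :=
        mul_le_mul_of_nonneg_left hPcard (le_of_lt hβ)
      calc β = β * 1 := by ring
        _ ≤ β * ((P c).card : ℝ) := this
        _ ≤ (S.card : ℝ) := hc
    have hbig : β * ν * ζ ^ 2 * ((C c).card : ℝ)
        ≤ (S.card : ℝ) * (ν * ((C c).card : ℝ) * ζ ^ 2) := by
      have hpos : 0 ≤ ν * ((C c).card : ℝ) * ζ ^ 2 := by positivity
      nlinarith [hScard, hpos]
    linarith [hiden c, hsum1, hsum2, hconst ▸ hsum1, hbig]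
  -- sum up
  have hGsum : ∑ c : β', ((C c).card : ℝ) * (aC c) ^ 2
        + (G.card : ℝ) * (β * ν * ζ ^ 2 * (μ * n))
      ≤ ∑ c : β', ∑ c' ∈ P c, ((D c').card : ℝ) * (aD c') ^ 2 := by
    have key : ∀ c : β', ((C c).card : ℝ) * (aC c) ^ 2
        + (if c ∈ G then β * ν * ζ ^ 2 * (μ * n) else 0)
        ≤ ∑ c' ∈ P c, ((D c').card : ℝ) * (aD c') ^ 2 := by
      intro c
      by_cases hc : c ∈ G
      · simp only [hc, if_true]
        have hCn : μ * n ≤ ((C c).card : ℝ) := by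
          have h := hcell c
          rw [le_div_iff₀ hXpos] at h
          exact h
        have := h2 c hc
        have hmono : β * ν * ζ ^ 2 * (μ * n) ≤ β * ν * ζ ^ 2 * ((C c).card : ℝ) := by
          apply mul_le_mul_of_nonneg_left hCn
          positivity
        linarith
      · simp only [hc, if_false, add_zero]
        exact h1 c
    have := Finset.sum_le_sum (fun c (_ : c ∈ Finset.univ) => key c)
    rw [Finset.sum_add_distrib] at this
    rwa [Finset.sum_ite_mem, Finset.univ_inter, Finset.sum_const, nsmul_eq_mul] at this
  have hGcard : β * (Fintype.card β' : ℝ) ≤ (G.card : ℝ) := hdev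
  -- conclude
  rw [ge_iff_le, div_add' _ _ _ (ne_of_gt hXpos), div_le_div_iff₀ hXpos hXpos]
  rw [hE, hE', hE'2]
  have hfinal : β * (Fintype.card β' : ℝ) * μ * (β * ν / 2) * ζ ^ 2 / 2 * n
      ≤ (G.card : ℝ) * (β * ν * ζ ^ 2 * (μ * n)) := by
    have hN : (0:ℝ) ≤ (Fintype.card β' : ℝ) := Nat.cast_nonneg _
    have h0 : 0 ≤ β * ν * ζ ^ 2 * (μ * n) := by positivity
    have : β * (Fintype.card β' : ℝ) * (β * ν * ζ ^ 2 * (μ * n))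
        ≤ (G.card : ℝ) * (β * ν * ζ ^ 2 * (μ * n)) :=
      mul_le_mul_of_nonneg_right hGcard h0
    nlinarith [mul_nonneg (mul_nonneg (le_of_lt hβ) hN) h0]
  nlinarith [hGsum, hfinal]
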